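/- Every extremal class is distance preserving: if C ⊆ {0,1}^n is extremal, then for every c₀, c₁ ∈ C, the graph distance between c₀ and c₁ in the one-inclusion graph of C equals their Hamming distance. -/

import Mathlib

variable {n : ℕ}

/-- `S` is shattered by the concept class `C`. -/
def Shatters (C : Set (Fin n → Bool)) (S : Finset (Fin n)) : Prop :=
  ∀ f : Fin n → Bool, ∃ c ∈ C, ∀ x ∈ S, c x = f x

/-- `B` is a cube of `C` with dimension set `S`. -/
def IsCube (C B : Set (Fin n → Bool)) (S : Finset (Fin n)) : Prop :=
  B ⊆ C ∧ (∀ b ∈ B, ∀ b' ∈ B, ∀ x, x ∉ S → b x = b' x) ∧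
    (∀ f : Fin n → Bool, ∃ b ∈ B, ∀ x ∈ S, b x = f x)

/-- `S` is strongly shattered by `C`. -/
def StronglyShatters (C : Set (Fin n → Bool)) (S : Finset (Fin n)) : Prop :=
  ∃ B, IsCube C B S

/-- `C` is extremal: every shattered set is strongly shattered. -/
def Extremal (C : Set (Fin n → Bool)) : Prop :=
  ∀ S, Shatters C S → StronglyShatters C S

/-- The one-inclusion graph of `C`: vertices are the concepts of `C`, edges
connect concepts at Hamming distance 1. -/
def oneInclusionGraph (C : Set (Fin n → Bool)) : SimpleGraph C where
  Adj u v := hammingDist u.1 v.1 = 1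
  symm := ⟨by intro u v h; exact (hammingDist_comm v.1 u.1).trans h⟩
  loopless := ⟨by intro u h; simp [hammingDist_self] at h⟩

namespace ExtremalProof

open Finset

lemma Shatters.mono {C D : Set (Fin n → Bool)} (h : C ⊆ D) {S} (hS : Shatters C S) :
    Shatters D S := fun f => by
  obtain ⟨c, hc, hcf⟩ := hS f; exact ⟨c, h hc, hcf⟩

lemma strong_shatters {C : Set (Fin n → Bool)} {S}
    (h : StronglyShatters C S) : Shatters C S := by
  obtain ⟨B, hBC, _, hpat⟩ := h
  intro f; obtain ⟨b, hb, hbf⟩ := hpat f; exact ⟨b, hBC hb, hbf⟩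

open Classical in
noncomputable def shF (A : Finset (Fin n → Bool)) : Finset (Finset (Fin n)) :=
  Finset.univ.filter fun S => Shatters (A : Set (Fin n → Bool)) S

open Classical in
noncomputable def sshF (A : Finset (Fin n → Bool)) : Finset (Finset (Fin n)) :=
  Finset.univ.filter fun S => StronglyShatters (A : Set (Fin n → Bool)) S

lemma mem_shF {A : Finset (Fin n → Bool)} {S} : S ∈ shF A ↔ Shatters ↑A S := by
  classical simp [shF]

lemma mem_sshF {A : Finset (Fin n → Bool)} {S} :
    S ∈ sshF A ↔ StronglyShatters ↑A S := by
  classical simp [sshF]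

lemma sshF_subset_shF (A : Finset (Fin n → Bool)) : sshF A ⊆ shF A :=
  fun _ hS => mem_shF.2 (strong_shatters (mem_sshF.1 hS))

def lev (A : Finset (Fin n → Bool)) (i : Fin n) (b : Bool) : Finset (Fin n → Bool) :=
  A.filter fun c => c i = b

lemma mem_lev {A : Finset (Fin n → Bool)} {i b c} :
    c ∈ lev A i b ↔ c ∈ A ∧ c i = b := by simp [lev]

lemma lev_card (A : Finset (Fin n → Bool)) (i : Fin n) :
    (lev A i false).card + (lev A i true).card = A.card := by
  classical
  have := Finset.card_filter_add_card_filter_not (s := A)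
    (p := fun c => c i = false)
  simpa [lev, Bool.not_eq_false] using this

lemma not_mem_of_shatters_lev {A : Finset (Fin n → Bool)} {i b S}
    (h : Shatters ↑(lev A i b) S) : i ∉ S := by
  intro hi
  obtain ⟨c, hc, hcf⟩ := h (fun _ => !b)
  have h1 : c i = b := (mem_lev.1 hc).2
  have h2 := hcf i hi
  simp [h1] at h2


lemma coe_lev_subset {A : Finset (Fin n → Bool)} {i b} :
    (↑(lev A i b) : Set (Fin n → Bool)) ⊆ ↑A := by
  intro c hc; exact (mem_lev.1 hc).1

lemma shF_split (A : Finset (Fin n → Bool)) (i : Fin n) :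
    (shF (lev A i false)).card + (shF (lev A i true)).card ≤ (shF A).card := by
  classical
  set E := shF (lev A i false) with hE
  set D := shF (lev A i true) with hD
  have hsub : E ∪ D ⊆ shF A := by
    intro S hS
    rcases Finset.mem_union.1 hS with h | h
    · exact mem_shF.2 (Shatters.mono coe_lev_subset (mem_shF.1 h))
    · exact mem_shF.2 (Shatters.mono coe_lev_subset (mem_shF.1 h))
  have himg : (E ∩ D).image (insert i) ⊆ shF A := by
    intro S hS
    obtain ⟨S', hS', rfl⟩ := Finset.mem_image.1 hS
    rw [Finset.mem_inter] at hS'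
    rw [mem_shF]
    intro f
    cases hf : f i with
    | false =>
        obtain ⟨c, hc, hcf⟩ := (mem_shF.1 hS'.1) f
        refine ⟨c, coe_lev_subset hc, ?_⟩
        intro x hx
        rcases Finset.mem_insert.1 hx with rfl | hx
        · rw [hf]; exact (mem_lev.1 hc).2
        · exact hcf x hx
    | true =>
        obtain ⟨c, hc, hcf⟩ := (mem_shF.1 hS'.2) f
        refine ⟨c, coe_lev_subset hc, ?_⟩
        intro x hx
        rcases Finset.mem_insert.1 hx with rfl | hx
        · rw [hf]; exact (mem_lev.1 hc).2
        · exact hcf x hx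
  have hiE : ∀ S ∈ E, i ∉ S := fun S hS => not_mem_of_shatters_lev (mem_shF.1 hS)
  have hiD : ∀ S ∈ D, i ∉ S := fun S hS => not_mem_of_shatters_lev (mem_shF.1 hS)
  have hdisj : Disjoint (E ∪ D) ((E ∩ D).image (insert i)) := by
    rw [Finset.disjoint_left]
    intro S hS hS'
    obtain ⟨S', _, rfl⟩ := Finset.mem_image.1 hS'
    rcases Finset.mem_union.1 hS with h | h
    · exact hiE _ h (Finset.mem_insert_self i S')
    · exact hiD _ h (Finset.mem_insert_self i S')
  have hinj : ((E ∩ D).image (insert i)).card = (E ∩ D).card := by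
    apply Finset.card_image_of_injOn
    intro S hS T hT hST
    have hSi : i ∉ S := hiE S (Finset.mem_inter.1 hS).1
    have hTi : i ∉ T := hiE T (Finset.mem_inter.1 hT).1
    have : (insert i S).erase i = (insert i T).erase i := by rw [hST]
    rwa [Finset.erase_insert hSi, Finset.erase_insert hTi] at this
  calc E.card + D.card = (E ∪ D).card + (E ∩ D).card :=
        (Finset.card_union_add_card_inter E D).symm
    _ = (E ∪ D).card + ((E ∩ D).image (insert i)).card := by rw [hinj]
    _ = ((E ∪ D) ∪ (E ∩ D).image (insert i)).card :=
        (Finset.card_union_of_disjoint hdisj).symm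
    _ ≤ (shF A).card := Finset.card_le_card (Finset.union_subset hsub himg)

lemma sshF_split (A : Finset (Fin n → Bool)) (i : Fin n) :
    (sshF A).card ≤ (sshF (lev A i false)).card + (sshF (lev A i true)).card := by
  classical
  set E := sshF (lev A i false) with hE
  set D := sshF (lev A i true) with hD
  have hsub : sshF A ⊆ (E ∪ D) ∪ (E ∩ D).image (insert i) := by
    intro S hS
    obtain ⟨B, hBA, hagree, hpat⟩ := mem_sshF.1 hS
    by_cases hi : i ∈ S
    · -- split cube into levels
      refine Finset.mem_union_right _ (Finset.mem_image.2 ⟨S.erase i, ?_, by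
        rw [Finset.insert_erase hi]⟩)
      have key : ∀ b : Bool, StronglyShatters (↑(lev A i b)) (S.erase i) := by
        intro b
        refine ⟨{x ∈ B | x i = b}, ?_, ?_, ?_⟩
        · intro x hx
          rw [Finset.mem_coe, mem_lev]
          exact ⟨by simpa using hBA hx.1, hx.2⟩
        · intro x hx y hy z hz
          rcases eq_or_ne z i with rfl | hzi
          · rw [hx.2, hy.2]
          · exact hagree x hx.1 y hy.1 z (fun hzS => hz (Finset.mem_erase.2 ⟨hzi, hzS⟩))
        · intro f
          obtain ⟨x, hx, hxf⟩ := hpat (Function.update f i b)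
          have hxi : x i = b := by
            have := hxf i hi; rwa [Function.update_self] at this
          refine ⟨x, ⟨hx, hxi⟩, ?_⟩
          intro y hy
          have hyi : y ≠ i := (Finset.mem_erase.1 hy).1
          have := hxf y (Finset.mem_erase.1 hy).2
          rwa [Function.update_of_ne hyi] at this
      exact Finset.mem_inter.2 ⟨mem_sshF.2 (key false), mem_sshF.2 (key true)⟩
    · -- cube lies in one level
      have hBne : B.Nonempty := by
        obtain ⟨b, hb, _⟩ := hpat (fun _ => false); exact ⟨b, hb⟩
      obtain ⟨x₀, hx₀⟩ := hBne
      have hlev : StronglyShatters (↑(lev A i (x₀ i))) S := by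
        refine ⟨B, ?_, ?_, hpat⟩
        · intro x hx
          rw [Finset.mem_coe, mem_lev]
          exact ⟨by simpa using hBA hx, hagree x hx x₀ hx₀ i hi⟩
        · intro x hx y hy z hz; exact hagree x hx y hy z hz
      cases hb : x₀ i with
      | false => exact Finset.mem_union_left _ (Finset.mem_union_left _
          (mem_sshF.2 (by rwa [hb] at hlev)))
      | true => exact Finset.mem_union_left _ (Finset.mem_union_right _
          (mem_sshF.2 (by rwa [hb] at hlev)))
  calc (sshF A).card ≤ ((E ∪ D) ∪ (E ∩ D).image (insert i)).card :=
        Finset.card_le_card hsub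
    _ ≤ (E ∪ D).card + ((E ∩ D).image (insert i)).card := Finset.card_union_le _ _
    _ ≤ (E ∪ D).card + (E ∩ D).card := by
        exact Nat.add_le_add_left (Finset.card_image_le) _
    _ = E.card + D.card := Finset.card_union_add_card_inter E D


lemma lev_ssubset {A : Finset (Fin n → Bool)} {i : Fin n} {b : Bool}
    (h : (lev A i (!b)).Nonempty) : lev A i b ⊂ A := by
  obtain ⟨c, hc⟩ := h
  rw [mem_lev] at hc
  refine Finset.ssubset_iff_of_subset (Finset.filter_subset _ _) |>.2 ⟨c, hc.1, ?_⟩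
  simp [Finset.mem_filter, hc.1, hc.2]

lemma exists_split_coord {A : Finset (Fin n → Bool)} (h : 1 < A.card) :
    ∃ i : Fin n, (lev A i false).Nonempty ∧ (lev A i true).Nonempty := by
  obtain ⟨u, hu, v, hv, huv⟩ := Finset.one_lt_card.1 h
  have hex : ∃ i, u i ≠ v i := by
    by_contra hcon
    push_neg at hcon
    exact huv (funext hcon)
  obtain ⟨i, hi⟩ := hex
  have hb : ∀ b, ∃ c ∈ A, c i = b := by
    intro b
    by_cases h1 : u i = b
    · exact ⟨u, hu, h1⟩
    · refine ⟨v, hv, ?_⟩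
      revert hi h1; cases u i <;> cases v i <;> cases b <;> simp
  obtain ⟨c0, hc0, hc0'⟩ := hb false
  obtain ⟨c1, hc1, hc1'⟩ := hb true
  exact ⟨i, ⟨c0, mem_lev.2 ⟨hc0, hc0'⟩⟩, ⟨c1, mem_lev.2 ⟨hc1, hc1'⟩⟩⟩

lemma card_le_shF_card (A : Finset (Fin n → Bool)) : A.card ≤ (shF A).card := by
  classical
  induction A using Finset.strongInduction with
  | _ A ih =>
    by_cases h1 : 1 < A.card
    · obtain ⟨i, hf, ht⟩ := exists_split_coord h1
      have hE : lev A i false ⊂ A := lev_ssubset (b := false) (by simpa using ht)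
      have hD : lev A i true ⊂ A := lev_ssubset (b := true) (by simpa using hf)
      calc A.card = (lev A i false).card + (lev A i true).card := (lev_card A i).symm
        _ ≤ (shF (lev A i false)).card + (shF (lev A i true)).card :=
            Nat.add_le_add (ih _ hE) (ih _ hD)
        _ ≤ (shF A).card := shF_split A i
    · push_neg at h1
      rcases A.eq_empty_or_nonempty with rfl | ⟨c, hc⟩
      · simp
      · have : (∅ : Finset (Fin n)) ∈ shF A := by
          rw [mem_shF]
          intro f
          exact ⟨c, by simpa using hc, by simp⟩
        have h2 : 1 ≤ (shF A).card := Finset.card_pos.2 ⟨_, this⟩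
        omega

lemma sshF_card_le_card (A : Finset (Fin n → Bool)) : (sshF A).card ≤ A.card := by
  classical
  induction A using Finset.strongInduction with
  | _ A ih =>
    by_cases h1 : 1 < A.card
    · obtain ⟨i, hf, ht⟩ := exists_split_coord h1
      have hE : lev A i false ⊂ A := lev_ssubset (b := false) (by simpa using ht)
      have hD : lev A i true ⊂ A := lev_ssubset (b := true) (by simpa using hf)
      calc (sshF A).card
          ≤ (sshF (lev A i false)).card + (sshF (lev A i true)).card := sshF_split A i
        _ ≤ (lev A i false).card + (lev A i true).card :=
            Nat.add_le_add (ih _ hE) (ih _ hD)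
        _ = A.card := lev_card A i
    · push_neg at h1
      rcases A.eq_empty_or_nonempty with rfl | hA
      · have : sshF (∅ : Finset (Fin n → Bool)) = ∅ := by
          rw [Finset.eq_empty_iff_forall_notMem]
          intro S hS
          obtain ⟨B, hBA, _, hpat⟩ := mem_sshF.1 hS
          obtain ⟨b, hb, _⟩ := hpat (fun _ => false)
          simpa using hBA hb
        simp [this]
      · have hsub : sshF A ⊆ {∅} := by
          intro S hS
          rw [Finset.mem_singleton]
          obtain ⟨B, hBA, _, hpat⟩ := mem_sshF.1 hS
          by_contra hSne
          obtain ⟨x, hx⟩ := Finset.nonempty_iff_ne_empty.2 hSne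
          obtain ⟨b0, hb0, hb0f⟩ := hpat (fun _ => false)
          obtain ⟨b1, hb1, hb1f⟩ := hpat (fun _ => true)
          have : b0 ≠ b1 := by
            intro hcon
            have := (hb0f x hx).symm.trans (hcon ▸ hb1f x hx)
            simp at this
          have h2 : 1 < A.card := by
            refine Finset.one_lt_card.2 ⟨b0, ?_, b1, ?_, this⟩
            · simpa using hBA hb0
            · simpa using hBA hb1
          omega
        have := Finset.card_le_card hsub
        simp at this
        have : A.card = 1 := by
          have := Finset.card_pos.2 hA; omega
        omega


lemma shF_eq_sshF_of_extremal {A : Finset (Fin n → Bool)}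
    (hA : Extremal (↑A : Set (Fin n → Bool))) : shF A = sshF A := by
  apply Finset.Subset.antisymm
  · intro S hS; exact mem_sshF.2 (hA S (mem_shF.1 hS))
  · exact sshF_subset_shF A

lemma card_shF_of_extremal {A : Finset (Fin n → Bool)}
    (hA : Extremal (↑A : Set (Fin n → Bool))) :
    (shF A).card = A.card ∧ (sshF A).card = A.card := by
  have h1 := card_le_shF_card A
  have h2 := sshF_card_le_card A
  have h3 := shF_eq_sshF_of_extremal hA
  rw [h3] at h1
  constructor
  · rw [h3]; omega
  · omega

lemma extremal_of_counts {A : Finset (Fin n → Bool)}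
    (h1 : (shF A).card ≤ A.card) (h2 : A.card ≤ (sshF A).card) :
    Extremal (↑A : Set (Fin n → Bool)) := by
  have hsub := sshF_subset_shF A
  have hle := card_le_shF_card A
  have hge := sshF_card_le_card A
  have : shF A = sshF A := by
    apply (Finset.eq_of_subset_of_card_le hsub ?_).symm
    omega
  intro S hS
  have : S ∈ sshF A := by
    rw [← this, mem_shF]; exact hS
  exact mem_sshF.1 this

lemma extremal_lev {A : Finset (Fin n → Bool)}
    (hA : Extremal (↑A : Set (Fin n → Bool))) (i : Fin n) (b : Bool) :
    Extremal (↑(lev A i b) : Set (Fin n → Bool)) := by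
  obtain ⟨hshA, hsshA⟩ := card_shF_of_extremal hA
  have hsplit := shF_split A i
  have hssplit := sshF_split A i
  have hcard := lev_card A i
  have p1 := card_le_shF_card (lev A i false)
  have p2 := card_le_shF_card (lev A i true)
  have q1 := sshF_card_le_card (lev A i false)
  have q2 := sshF_card_le_card (lev A i true)
  have hshE : (shF (lev A i false)).card = (lev A i false).card ∧
      (shF (lev A i true)).card = (lev A i true).card := by omega
  have hsshE : (sshF (lev A i false)).card = (lev A i false).card ∧
      (sshF (lev A i true)).card = (lev A i true).card := by omega
  cases b
  · exact extremal_of_counts (by omega) (by omega)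
  · exact extremal_of_counts (by omega) (by omega)

lemma extremal_restrict_one {C : Set (Fin n → Bool)} (hC : Extremal C)
    (i : Fin n) (b : Bool) : Extremal {c ∈ C | c i = b} := by
  classical
  have hfin : C.Finite := Set.toFinite C
  set A := hfin.toFinset with hAdef
  have hcoe : (↑A : Set (Fin n → Bool)) = C := hfin.coe_toFinset
  have hA : Extremal (↑A : Set (Fin n → Bool)) := by rwa [hcoe]
  have := extremal_lev hA i b
  have hcoe2 : (↑(lev A i b) : Set (Fin n → Bool)) = {c ∈ C | c i = b} := by
    ext c
    simp only [lev, Finset.coe_filter, Set.mem_setOf_eq, Set.Finite.mem_toFinset, hAdef]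
  rwa [hcoe2] at this

lemma extremal_face {C : Set (Fin n → Bool)} (hC : Extremal C)
    (u : Fin n → Bool) (F : Finset (Fin n)) :
    Extremal {c ∈ C | ∀ x ∈ F, c x = u x} := by
  classical
  induction F using Finset.induction with
  | empty => simpa using hC
  | insert a F hnotmem ih =>
    have heq : {c ∈ C | ∀ x ∈ insert a F, c x = u x} =
        {c ∈ {c ∈ C | ∀ x ∈ F, c x = u x} | c a = u a} := by
      ext c
      simp only [Set.mem_setOf_eq, Finset.mem_insert]
      constructor
      · intro ⟨h1, h2⟩
        exact ⟨⟨h1, fun x hx => h2 x (Or.inr hx)⟩, h2 a (Or.inl rfl)⟩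
      · intro ⟨⟨h1, h2⟩, h3⟩
        refine ⟨h1, fun x hx => ?_⟩
        rcases hx with rfl | hx
        · exact h3
        · exact h2 x hx
    rw [heq]
    exact extremal_restrict_one ih a (u a)


lemma bool_eq_of_ne_of_ne {a b c : Bool} (h1 : b ≠ a) (h2 : c ≠ a) : b = c := by
  cases a <;> cases b <;> cases c <;> simp_all

lemma hammingDist_eq (u c : Fin n → Bool) :
    hammingDist u c = (Finset.univ.filter fun i => u i ≠ c i).card := rfl

lemma exists_flip {C : Set (Fin n → Bool)} (hC : Extremal C)
    {u v : Fin n → Bool} (hu : u ∈ C) (hv : v ∈ C) (huv : u ≠ v) :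
    ∃ i : Fin n, u i ≠ v i ∧ Function.update u i (v i) ∈ C := by
  classical
  set P : Set (Fin n → Bool) :=
    {c | c ∈ C ∧ c ≠ u ∧ ∀ x, u x = v x → c x = u x} with hPdef
  have hvP : v ∈ P := ⟨hv, fun h => huv h.symm, fun x hx => hx.symm⟩
  have hPfin : P.Finite := Set.toFinite P
  obtain ⟨c, hcF, hmin⟩ := (hPfin.toFinset).exists_min_image
    (fun c => hammingDist u c) ⟨v, hPfin.mem_toFinset.2 hvP⟩
  rw [Set.Finite.mem_toFinset] at hcF
  obtain ⟨hcC, hcu, hcube⟩ := hcF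
  have hd0 : hammingDist u c ≠ 0 := fun h =>
    hcu (eq_of_hammingDist_eq_zero h).symm
  rcases Nat.lt_or_ge (hammingDist u c) 2 with hd | hd
  · -- hammingDist u c = 1
    have hd1 : (Finset.univ.filter fun i => u i ≠ c i).card = 1 := by
      rw [← hammingDist_eq]; omega
    obtain ⟨i, hi⟩ := Finset.card_eq_one.1 hd1
    have hiu : u i ≠ c i := by
      have : i ∈ Finset.univ.filter fun j => u j ≠ c j := by
        rw [hi]; exact Finset.mem_singleton_self i
      simpa using this
    have hoff : ∀ j, j ≠ i → u j = c j := by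
      intro j hj
      by_contra hne
      have : j ∈ Finset.univ.filter fun k => u k ≠ c k := by simpa using hne
      rw [hi, Finset.mem_singleton] at this
      exact hj this
    have huvi : u i ≠ v i := by
      intro h
      exact hiu (hcube i h).symm
    refine ⟨i, huvi, ?_⟩
    have : Function.update u i (v i) = c := by
      funext j
      rcases eq_or_ne j i with rfl | hj
      · rw [Function.update_self]
        exact bool_eq_of_ne_of_ne (a := u j) (Ne.symm huvi) (fun h => hiu h.symm)
      · rw [Function.update_of_ne hj]
        exact hoff j hj
    rwa [this]
  · -- hammingDist u c ≥ 2 : contradiction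
    exfalso
    set Agr : Finset (Fin n) := Finset.univ.filter (fun x => u x = c x) with hAgr
    have hC'' := extremal_face hC u Agr
    set C'' : Set (Fin n → Bool) := {z ∈ C | ∀ x ∈ Agr, z x = u x} with hC''def
    have hmemAgr : ∀ x, x ∈ Agr ↔ u x = c x := by
      intro x; simp [hAgr]
    have huC'' : u ∈ C'' := ⟨hu, fun x _ => rfl⟩
    have hcC'' : c ∈ C'' := ⟨hcC, fun x hx => ((hmemAgr x).1 hx).symm⟩
    have hsub : C'' ⊆ {u, c} := by
      intro z hz
      obtain ⟨hzC, hzagr⟩ := hz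
      rcases eq_or_ne z u with rfl | hzu
      · exact Set.mem_insert _ _
      · have hzP : z ∈ P := by
          refine ⟨hzC, hzu, ?_⟩
          intro x hx
          exact hzagr x ((hmemAgr x).2 (hcube x hx).symm)
        have h1 : hammingDist u c ≤ hammingDist u z :=
          hmin z (hPfin.mem_toFinset.2 hzP)
        have hfsub : (Finset.univ.filter fun j => u j ≠ z j) ⊆
            (Finset.univ.filter fun j => u j ≠ c j) := by
          intro j hj
          simp only [Finset.mem_filter, Finset.mem_univ, true_and] at hj ⊢
          intro hujc
          exact hj (hzagr j ((hmemAgr j).2 hujc)).symm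
        have h2 : hammingDist u z ≤ hammingDist u c := by
          rw [hammingDist_eq, hammingDist_eq]
          exact Finset.card_le_card hfsub
        have hfeq : (Finset.univ.filter fun j => u j ≠ z j) =
            (Finset.univ.filter fun j => u j ≠ c j) :=
          Finset.eq_of_subset_of_card_le hfsub (by
            rw [← hammingDist_eq, ← hammingDist_eq]; omega)
        have : z = c := by
          funext x
          by_cases hx : u x = c x
          · rw [hzagr x ((hmemAgr x).2 hx)]; exact hx
          · have : x ∈ Finset.univ.filter fun j => u j ≠ z j := by
              rw [hfeq]; simpa using hx
            have huz : u x ≠ z x := by simpa using this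
            exact bool_eq_of_ne_of_ne (fun h => huz h.symm) (fun h => hx h.symm)
        rw [this]
        exact Set.mem_insert_iff.2 (Or.inr rfl)
    -- pick i in the disagreement set
    have hd2 : 1 < (Finset.univ.filter fun j => u j ≠ c j).card := by
      rw [← hammingDist_eq]; omega
    obtain ⟨i, hiF, j, hjF, hij⟩ := Finset.one_lt_card.1 hd2
    have hiu : u i ≠ c i := by simpa using hiF
    have hju : u j ≠ c j := by simpa using hjF
    have hshat : Shatters C'' {i} := by
      intro f
      by_cases hf : f i = u i
      · exact ⟨u, huC'', fun x hx => by
          rw [Finset.mem_singleton] at hx; subst hx; exact hf.symm⟩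
      · refine ⟨c, hcC'', fun x hx => ?_⟩
        rw [Finset.mem_singleton] at hx; subst hx
        exact bool_eq_of_ne_of_ne (fun h => hiu h.symm) hf
    obtain ⟨B, hBC'', hagree, hpat⟩ := hC'' {i} hshat
    obtain ⟨b0, hb0, hb0f⟩ := hpat (fun _ => u i)
    obtain ⟨b1, hb1, hb1f⟩ := hpat (fun _ => c i)
    have hb0u : b0 = u := by
      rcases hsub (hBC'' hb0) with h | h
      · exact h
      · exfalso
        have := hb0f i (Finset.mem_singleton_self i)
        rw [Set.mem_singleton_iff.1 h] at this
        exact hiu this.symm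
    have hb1c : b1 = c := by
      rcases hsub (hBC'' hb1) with h | h
      · exfalso
        have := hb1f i (Finset.mem_singleton_self i)
        rw [h] at this
        exact hiu this
      · exact Set.mem_singleton_iff.1 h
    have := hagree b0 hb0 b1 hb1 j (by
      rw [Finset.mem_singleton]; exact fun h => hij h.symm)
    rw [hb0u, hb1c] at this
    exact hju this



lemma hamming_le_walk_length {C : Set (Fin n → Bool)} :
    ∀ {u v : C} (p : (oneInclusionGraph C).Walk u v), hammingDist u.1 v.1 ≤ p.length := by
  intro u v p
  induction p with
  | nil => simp
  | @cons a b c h q ih =>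
    have htri := hammingDist_triangle a.1 b.1 c.1
    have hab : hammingDist a.1 b.1 = 1 := h
    rw [SimpleGraph.Walk.length_cons]
    omega

lemma exists_walk {C : Set (Fin n → Bool)} (hC : Extremal C) :
    ∀ (d : ℕ) (u v : C), hammingDist u.1 v.1 = d →
    ∃ p : (oneInclusionGraph C).Walk u v, p.length = d := by
  intro d
  induction d using Nat.strong_induction_on with
  | _ d ih =>
    intro u v hd
    rcases Nat.eq_zero_or_pos d with rfl | hpos
    · have h1 : u.1 = v.1 := eq_of_hammingDist_eq_zero hd
      have h2 : u = v := Subtype.ext h1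
      subst h2
      exact ⟨SimpleGraph.Walk.nil, rfl⟩
    · have huv : u.1 ≠ v.1 := by
        intro h
        rw [h, hammingDist_self] at hd
        omega
      obtain ⟨i, hi, hmem⟩ := exists_flip hC u.2 v.2 huv
      set c : C := ⟨Function.update u.1 i (v.1 i), hmem⟩ with hcdef
      have hadj : (oneInclusionGraph C).Adj u c := by
        show hammingDist u.1 c.1 = 1
        rw [hammingDist_eq]
        have : (Finset.univ.filter fun j => u.1 j ≠ c.1 j) = {i} := by
          ext j
          simp only [Finset.mem_filter, Finset.mem_univ, true_and, Finset.mem_singleton,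
            hcdef]
          constructor
          · intro hne
            by_contra hj
            exact hne (by rw [Function.update_of_ne hj])
          · intro hj
            subst hj
            rw [Function.update_self]
            exact hi
        rw [this, Finset.card_singleton]
      have hdc : hammingDist c.1 v.1 = d - 1 := by
        rw [hammingDist_eq]
        have : (Finset.univ.filter fun j => c.1 j ≠ v.1 j) =
            (Finset.univ.filter fun j => u.1 j ≠ v.1 j).erase i := by
          ext j
          simp only [Finset.mem_filter, Finset.mem_univ, true_and, Finset.mem_erase, hcdef]
          constructor
          · intro hne
            rcases eq_or_ne j i with rfl | hj
            · rw [Function.update_self] at hne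
              exact absurd rfl hne
            · rw [Function.update_of_ne hj] at hne
              exact ⟨hj, hne⟩
          · intro ⟨hj, hne⟩
            rw [Function.update_of_ne hj]
            exact hne
        rw [this, Finset.card_erase_of_mem (by simpa using hi), ← hammingDist_eq, hd]
      obtain ⟨p, hp⟩ := ih (d - 1) (by omega) c v hdc
      refine ⟨SimpleGraph.Walk.cons hadj p, ?_⟩
      rw [SimpleGraph.Walk.length_cons, hp]
      omega

end ExtremalProof

/-- Extremal classes are distance preserving: graph distance in the
one-inclusion graph equals Hamming distance. -/
theorem extremal_distance_preserving (n : ℕ) (C : Set (Fin n → Bool))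
    (hC : Extremal C) (c₀ c₁ : C) :
    (oneInclusionGraph C).dist c₀ c₁ = hammingDist c₀.1 c₁.1 := by
  obtain ⟨p, hp⟩ := ExtremalProof.exists_walk hC (hammingDist c₀.1 c₁.1) c₀ c₁ rfl
  have h1 : (oneInclusionGraph C).dist c₀ c₁ ≤ hammingDist c₀.1 c₁.1 := by
    have := SimpleGraph.dist_le p
    omega
  have h2 : hammingDist c₀.1 c₁.1 ≤ (oneInclusionGraph C).dist c₀ c₁ := by
    have hr : (oneInclusionGraph C).Reachable c₀ c₁ := ⟨p⟩
    obtain ⟨q, hq⟩ := hr.exists_walk_length_eq_dist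
    have := ExtremalProof.hamming_le_walk_length q
    omega
  omega
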